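/- Let \(A\) be a symmetric \(3\times3\) complex matrix, \(\xi\in\mathbb{R}^3\) nonzero, and suppose the quantity \(-2|A\xi|^2|\xi|^2+\tfrac12|\xi^T A\xi|^2+\tfrac12\,\xi^T A\xi\cdot\overline{\operatorname{tr}A}\,|\xi|^2+\tfrac12\,\xi^T\bar A\xi\cdot\operatorname{tr}A\,|\xi|^2-\tfrac12|\operatorname{tr}A|^2|\xi|^4+|A|^2|\xi|^4\) equals zero. Then there exist \(\alpha\in\mathbb{C}\) and \(\beta\in\mathbb{C}^3\) such that \(a_{ij}=\alpha\,\delta_{ij}+\beta_i\xi_j+\beta_j\xi_i\) for all \(i,j\). -/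

import Mathlib

set_option maxHeartbeats 1000000

open Finset

noncomputable def secondVariationIntegrand (A : Matrix (Fin 3) (Fin 3) ℂ) (ξ : Fin 3 → ℝ) : ℂ :=
  let ξC : Fin 3 → ℂ := fun i => (ξ i : ℂ)
  let n2 : ℂ := ((∑ i, ξ i ^ 2 : ℝ) : ℂ)
  let Aξ2 : ℂ := ((∑ i, Complex.normSq (∑ j, A i j * ξC j) : ℝ) : ℂ)
  let q : ℂ := ∑ i, ∑ j, A i j * ξC i * ξC j
  let qbar : ℂ := ∑ i, ∑ j, (starRingEnd ℂ) (A i j) * ξC i * ξC j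
  let trA : ℂ := ∑ i, A i i
  let nA2 : ℂ := ((∑ i, ∑ j, Complex.normSq (A i j) : ℝ) : ℂ)
  (-2) * Aξ2 * n2 + (1 / 2) * ((Complex.normSq q : ℝ) : ℂ)
    + (1 / 2) * q * (starRingEnd ℂ) trA * n2 + (1 / 2) * qbar * trA * n2
    - (1 / 2) * ((Complex.normSq trA : ℝ) : ℂ) * n2 ^ 2 + nA2 * n2 ^ 2

private lemma trPAP (P A : Matrix (Fin 3) (Fin 3) ℂ) (nC : ℂ) (hP2 : P * P = nC • P) :
    Matrix.trace (P*A*P) = nC * Matrix.trace (A*P) := by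
  rw [Matrix.trace_mul_cycle, hP2, Matrix.smul_mul, Matrix.trace_smul, smul_eq_mul,
    Matrix.trace_mul_comm]

private lemma trMP (P A : Matrix (Fin 3) (Fin 3) ℂ) (nC : ℂ) (hP2 : P * P = nC • P) :
    Matrix.trace ((P*A*P) * P) = nC^2 * Matrix.trace (A*P) := by
  rw [Matrix.mul_assoc, hP2, Matrix.mul_smul, Matrix.trace_smul, smul_eq_mul,
    Matrix.trace_mul_cycle, hP2, Matrix.smul_mul, Matrix.trace_smul,
    smul_eq_mul, Matrix.trace_mul_comm]
  ring

private lemma trPM (P B : Matrix (Fin 3) (Fin 3) ℂ) (nC : ℂ) (hP2 : P * P = nC • P) :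
    Matrix.trace (P * (P*B*P)) = nC^2 * Matrix.trace (B*P) := by
  rw [Matrix.trace_mul_comm, Matrix.mul_assoc, hP2, Matrix.mul_smul, Matrix.trace_smul,
    smul_eq_mul, Matrix.trace_mul_cycle, hP2, Matrix.smul_mul,
    Matrix.trace_smul, smul_eq_mul, Matrix.trace_mul_comm]
  ring

private lemma trMM (P A B : Matrix (Fin 3) (Fin 3) ℂ) (nC : ℂ) (hP2 : P * P = nC • P) :
    Matrix.trace ((P*A*P) * (P*B*P)) = nC^2 * Matrix.trace (A*P*B*P) := by
  have e : (P*A*P) * (P*B*P) = nC • (P * (A * P * B * P)) := by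
    calc (P*A*P) * (P*B*P) = P * A * (P * P) * B * P := by
          simp only [Matrix.mul_assoc]
      _ = nC • (P * (A * P * B * P)) := by
          rw [hP2]; simp only [Matrix.mul_smul, Matrix.smul_mul, Matrix.mul_assoc]
  rw [e, Matrix.trace_smul, smul_eq_mul, Matrix.trace_mul_comm]
  have e2 : A * P * B * P * P = nC • (A*P*B*P) := by
    rw [Matrix.mul_assoc, hP2, Matrix.mul_smul]
  rw [e2, Matrix.trace_smul, smul_eq_mul]
  ring

theorem secondVariationIntegrand_eq_zero (A : Matrix (Fin 3) (Fin 3) ℂ)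
    (hA : A.IsSymm) (ξ : Fin 3 → ℝ) (hξ : ξ ≠ 0)
    (h0 : secondVariationIntegrand A ξ = 0) :
    ∃ (α : ℂ) (β : Fin 3 → ℂ), ∀ i j,
      A i j = α * (if i = j then 1 else 0) + β i * (ξ j : ℂ) + β j * (ξ i : ℂ) := by
  have hs : ∀ i j, A j i = A i j := fun i j => hA.apply i j
  have hn : (0:ℝ) < ∑ i, ξ i ^ 2 := by
    rcases Function.ne_iff.mp hξ with ⟨i, hi⟩
    have h1 : (0:ℝ) < ξ i ^ 2 := by rw [← sq_abs]; exact pow_pos (abs_pos.mpr hi) 2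
    exact h1.trans_le (Finset.single_le_sum (fun j _ => sq_nonneg (ξ j)) (mem_univ i))
  set nC : ℂ := ((∑ i, ξ i ^ 2 : ℝ) : ℂ) with hnCdef
  have hnC0 : nC ≠ 0 := by
    rw [hnCdef]; exact Complex.ofReal_ne_zero.mpr hn.ne'
  have hnrel : nC = (ξ 0:ℂ)^2 + (ξ 1:ℂ)^2 + (ξ 2:ℂ)^2 := by
    rw [hnCdef]; push_cast [Fin.sum_univ_three]; ring
  set P : Matrix (Fin 3) (Fin 3) ℂ :=
    Matrix.of fun i j => nC * (if i = j then 1 else 0) - (ξ i : ℂ) * (ξ j : ℂ) with hPdef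
  set cA : Matrix (Fin 3) (Fin 3) ℂ := A.map (starRingEnd ℂ) with hcAdef
  set M : Matrix (Fin 3) (Fin 3) ℂ := P * A * P with hMdef
  set Mc : Matrix (Fin 3) (Fin 3) ℂ := P * cA * P with hMcdef
  set t : ℂ := Matrix.trace M with htdef
  set tc : ℂ := Matrix.trace Mc with htcdef
  set N : Matrix (Fin 3) (Fin 3) ℂ := (2 * nC) • M - t • P with hNdef
  set Nc : Matrix (Fin 3) (Fin 3) ℂ := (2 * nC) • Mc - tc • P with hNcdef
  have hP2 : P * P = nC • P := by
    ext i j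
    fin_cases i <;> fin_cases j <;>
      · simp only [hPdef, Matrix.mul_apply, Matrix.smul_apply, Matrix.of_apply,
          Fin.sum_univ_three, smul_eq_mul, Fin.isValue, Fin.zero_eta, Fin.mk_one,
          Fin.reduceFinMk, Fin.reduceEq, reduceIte, if_true, if_false]
        rw [hnrel]; ring
  have hTrP : Matrix.trace P = 2 * nC := by
    simp only [hPdef, Matrix.trace, Matrix.diag, Matrix.of_apply, Fin.sum_univ_three,
      Fin.isValue, Fin.reduceEq, reduceIte, if_true, if_false, eq_self_iff_true, mul_one]
    rw [hnrel]; ring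
  have hconj : ∀ i j, (starRingEnd ℂ) (N i j) = Nc i j := by
    intro i j
    simp only [hNdef, hNcdef, hMdef, hMcdef, htdef, htcdef, hPdef, hcAdef, hnCdef,
      Matrix.sub_apply, Matrix.smul_apply, Matrix.mul_apply, Matrix.map_apply, Matrix.of_apply,
      Matrix.trace, Matrix.diag, Fin.sum_univ_three, smul_eq_mul,
      map_add, map_sub, map_mul, map_ofNat, Complex.conj_ofReal, apply_ite, map_one, map_zero]
    try ring
  have hNcsymm : ∀ i j, Nc j i = Nc i j := by
    intro i j
    fin_cases i <;> fin_cases j <;>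
      · simp only [hNcdef, hMcdef, hPdef, hcAdef, Matrix.sub_apply, Matrix.smul_apply,
          Matrix.mul_apply, Matrix.map_apply, Matrix.of_apply, Fin.sum_univ_three, smul_eq_mul,
          Fin.isValue, Fin.zero_eta, Fin.mk_one, Fin.reduceFinMk, Fin.reduceEq, reduceIte]
        try simp only [hs 0 1, hs 0 2, hs 1 2]
        try ring
  have ht' : t = nC * Matrix.trace (A * P) := trPAP P A nC hP2
  have htc' : tc = nC * Matrix.trace (cA * P) := trPAP P cA nC hP2
  have hMP : Matrix.trace (M * P) = nC ^ 2 * Matrix.trace (A * P) := trMP P A nC hP2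
  have hPMc : Matrix.trace (P * Mc) = nC ^ 2 * Matrix.trace (cA * P) := trPM P cA nC hP2
  have hPP : Matrix.trace (P * P) = 2 * nC ^ 2 := by
    rw [hP2, Matrix.trace_smul, hTrP, smul_eq_mul]; ring
  have hMMc : Matrix.trace (M * Mc) = nC ^ 2 * Matrix.trace (A * P * cA * P) :=
    trMM P A cA nC hP2
  -- core scalar identity
  have hcore : 2 * Matrix.trace (A * P * cA * P)
      - Matrix.trace (A * P) * Matrix.trace (cA * P)
      = 2 * secondVariationIntegrand A ξ := by
    simp only [secondVariationIntegrand]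
    simp only [hPdef, hcAdef, hnCdef, Matrix.trace, Matrix.diag, Matrix.mul_apply,
      Matrix.map_apply, Matrix.of_apply, Fin.sum_univ_three,
      map_add, map_sub, map_mul, map_sum, Complex.conj_ofReal, apply_ite, map_one, map_zero]
    push_cast [Fin.sum_univ_three]
    simp only [← Complex.mul_conj]
    simp only [map_add, map_sub, map_mul, Complex.conj_ofReal]
    simp only [hs 0 1, hs 0 2, hs 1 2, Fin.isValue, Fin.reduceEq, reduceIte]
    ring
  -- assemble
  have e1 : N * Nc = (4 * nC ^ 2) • (M * Mc) - (2 * nC * tc) • (M * P)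
      - (2 * nC * t) • (P * Mc) + (t * tc) • (P * P) := by
    rw [hNdef, hNcdef]
    simp only [Matrix.sub_mul, Matrix.mul_sub, Matrix.smul_mul, Matrix.mul_smul, smul_smul]
    module
  have hkey : (∑ i, ∑ j, N i j * Nc i j) = 4 * nC ^ 4 * secondVariationIntegrand A ξ := by
    have hsumtr : (∑ i, ∑ j, N i j * Nc i j) = Matrix.trace (N * Nc) := by
      simp only [Matrix.trace, Matrix.diag, Matrix.mul_apply]
      exact Finset.sum_congr rfl fun i _ => Finset.sum_congr rfl fun j _ => by
        rw [hNcsymm j i]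
    rw [hsumtr, e1]
    simp only [Matrix.trace_add, Matrix.trace_sub, Matrix.trace_smul, smul_eq_mul]
    rw [hMMc, hMP, hPMc, hPP, ht', htc']
    linear_combination (2 * nC ^ 4) * hcore
  have hreal : (∑ i, ∑ j, Complex.normSq (N i j) : ℝ) = 0 := by
    have hcast : ((∑ i, ∑ j, Complex.normSq (N i j) : ℝ) : ℂ) = ∑ i, ∑ j, N i j * Nc i j := by
      push_cast
      exact Finset.sum_congr rfl fun i _ => Finset.sum_congr rfl fun j _ => by
        rw [← hconj i j, Complex.mul_conj]
    have h2 : ((∑ i, ∑ j, Complex.normSq (N i j) : ℝ) : ℂ) = 0 := by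
      rw [hcast, hkey, h0]; ring
    exact_mod_cast h2
  have hN0 : ∀ i j, N i j = 0 := by
    intro i j
    have h1 := (Finset.sum_eq_zero_iff_of_nonneg
      (fun i _ => Finset.sum_nonneg fun j _ => Complex.normSq_nonneg _)).mp hreal i (mem_univ i)
    have h2 := (Finset.sum_eq_zero_iff_of_nonneg
      (fun j _ => Complex.normSq_nonneg _)).mp h1 j (mem_univ j)
    exact Complex.normSq_eq_zero.mp h2
  -- endgame
  set q : ℂ := ∑ i, ∑ j, A i j * (ξ i : ℂ) * (ξ j : ℂ) with hqdef
  set trA : ℂ := A 0 0 + A 1 1 + A 2 2 with htrAdef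
  have h4 : (4:ℂ) * nC ^ 3 ≠ 0 := by simp [hnC0]
  refine ⟨(2 * nC ^ 2 * (nC * trA - q)) / (4 * nC ^ 3),
    fun i => (4 * nC ^ 2 * (∑ k, A i k * (ξ k : ℂ)) - nC * (q + nC * trA) * (ξ i : ℂ))
      / (4 * nC ^ 3), ?_⟩
  intro i j
  fin_cases i <;> fin_cases j
  · have hN := hN0 0 0
    simp only [hNdef, hMdef, htdef, hPdef, Matrix.sub_apply, Matrix.smul_apply, Matrix.mul_apply,
      Matrix.of_apply, Matrix.trace, Matrix.diag, Fin.sum_univ_three, smul_eq_mul,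
      Fin.isValue, Fin.zero_eta, Fin.mk_one, Fin.reduceFinMk, Fin.reduceEq, reduceIte] at hN
    beta_reduce
    simp only [div_mul_eq_mul_div, ← add_div]
    rw [eq_div_iff h4]
    simp only [hqdef, htrAdef, Fin.sum_univ_three, Fin.isValue, Fin.zero_eta, Fin.mk_one,
      Fin.reduceFinMk, Fin.reduceEq, reduceIte]
    try simp only [hs 0 1, hs 0 2, hs 1 2] at hN
    try simp only [hs 0 1, hs 0 2, hs 1 2]
    rw [hnrel] at hN
    rw [hnrel]
    linear_combination 2 * hN
  · have hN := hN0 0 1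
    simp only [hNdef, hMdef, htdef, hPdef, Matrix.sub_apply, Matrix.smul_apply, Matrix.mul_apply,
      Matrix.of_apply, Matrix.trace, Matrix.diag, Fin.sum_univ_three, smul_eq_mul,
      Fin.isValue, Fin.zero_eta, Fin.mk_one, Fin.reduceFinMk, Fin.reduceEq, reduceIte] at hN
    beta_reduce
    simp only [div_mul_eq_mul_div, ← add_div]
    rw [eq_div_iff h4]
    simp only [hqdef, htrAdef, Fin.sum_univ_three, Fin.isValue, Fin.zero_eta, Fin.mk_one,
      Fin.reduceFinMk, Fin.reduceEq, reduceIte]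
    try simp only [hs 0 1, hs 0 2, hs 1 2] at hN
    try simp only [hs 0 1, hs 0 2, hs 1 2]
    rw [hnrel] at hN
    rw [hnrel]
    linear_combination 2 * hN
  · have hN := hN0 0 2
    simp only [hNdef, hMdef, htdef, hPdef, Matrix.sub_apply, Matrix.smul_apply, Matrix.mul_apply,
      Matrix.of_apply, Matrix.trace, Matrix.diag, Fin.sum_univ_three, smul_eq_mul,
      Fin.isValue, Fin.zero_eta, Fin.mk_one, Fin.reduceFinMk, Fin.reduceEq, reduceIte] at hN
    beta_reduce
    simp only [div_mul_eq_mul_div, ← add_div]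
    rw [eq_div_iff h4]
    simp only [hqdef, htrAdef, Fin.sum_univ_three, Fin.isValue, Fin.zero_eta, Fin.mk_one,
      Fin.reduceFinMk, Fin.reduceEq, reduceIte]
    try simp only [hs 0 1, hs 0 2, hs 1 2] at hN
    try simp only [hs 0 1, hs 0 2, hs 1 2]
    rw [hnrel] at hN
    rw [hnrel]
    linear_combination 2 * hN
  · have hN := hN0 1 0
    simp only [hNdef, hMdef, htdef, hPdef, Matrix.sub_apply, Matrix.smul_apply, Matrix.mul_apply,
      Matrix.of_apply, Matrix.trace, Matrix.diag, Fin.sum_univ_three, smul_eq_mul,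
      Fin.isValue, Fin.zero_eta, Fin.mk_one, Fin.reduceFinMk, Fin.reduceEq, reduceIte] at hN
    beta_reduce
    simp only [div_mul_eq_mul_div, ← add_div]
    rw [eq_div_iff h4]
    simp only [hqdef, htrAdef, Fin.sum_univ_three, Fin.isValue, Fin.zero_eta, Fin.mk_one,
      Fin.reduceFinMk, Fin.reduceEq, reduceIte]
    try simp only [hs 0 1, hs 0 2, hs 1 2] at hN
    try simp only [hs 0 1, hs 0 2, hs 1 2]
    rw [hnrel] at hN
    rw [hnrel]
    linear_combination 2 * hN
  · have hN := hN0 1 1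
    simp only [hNdef, hMdef, htdef, hPdef, Matrix.sub_apply, Matrix.smul_apply, Matrix.mul_apply,
      Matrix.of_apply, Matrix.trace, Matrix.diag, Fin.sum_univ_three, smul_eq_mul,
      Fin.isValue, Fin.zero_eta, Fin.mk_one, Fin.reduceFinMk, Fin.reduceEq, reduceIte] at hN
    beta_reduce
    simp only [div_mul_eq_mul_div, ← add_div]
    rw [eq_div_iff h4]
    simp only [hqdef, htrAdef, Fin.sum_univ_three, Fin.isValue, Fin.zero_eta, Fin.mk_one,
      Fin.reduceFinMk, Fin.reduceEq, reduceIte]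
    try simp only [hs 0 1, hs 0 2, hs 1 2] at hN
    try simp only [hs 0 1, hs 0 2, hs 1 2]
    rw [hnrel] at hN
    rw [hnrel]
    linear_combination 2 * hN
  · have hN := hN0 1 2
    simp only [hNdef, hMdef, htdef, hPdef, Matrix.sub_apply, Matrix.smul_apply, Matrix.mul_apply,
      Matrix.of_apply, Matrix.trace, Matrix.diag, Fin.sum_univ_three, smul_eq_mul,
      Fin.isValue, Fin.zero_eta, Fin.mk_one, Fin.reduceFinMk, Fin.reduceEq, reduceIte] at hN
    beta_reduce
    simp only [div_mul_eq_mul_div, ← add_div]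
    rw [eq_div_iff h4]
    simp only [hqdef, htrAdef, Fin.sum_univ_three, Fin.isValue, Fin.zero_eta, Fin.mk_one,
      Fin.reduceFinMk, Fin.reduceEq, reduceIte]
    try simp only [hs 0 1, hs 0 2, hs 1 2] at hN
    try simp only [hs 0 1, hs 0 2, hs 1 2]
    rw [hnrel] at hN
    rw [hnrel]
    linear_combination 2 * hN
  · have hN := hN0 2 0
    simp only [hNdef, hMdef, htdef, hPdef, Matrix.sub_apply, Matrix.smul_apply, Matrix.mul_apply,
      Matrix.of_apply, Matrix.trace, Matrix.diag, Fin.sum_univ_three, smul_eq_mul,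
      Fin.isValue, Fin.zero_eta, Fin.mk_one, Fin.reduceFinMk, Fin.reduceEq, reduceIte] at hN
    beta_reduce
    simp only [div_mul_eq_mul_div, ← add_div]
    rw [eq_div_iff h4]
    simp only [hqdef, htrAdef, Fin.sum_univ_three, Fin.isValue, Fin.zero_eta, Fin.mk_one,
      Fin.reduceFinMk, Fin.reduceEq, reduceIte]
    try simp only [hs 0 1, hs 0 2, hs 1 2] at hN
    try simp only [hs 0 1, hs 0 2, hs 1 2]
    rw [hnrel] at hN
    rw [hnrel]
    linear_combination 2 * hN
  · have hN := hN0 2 1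
    simp only [hNdef, hMdef, htdef, hPdef, Matrix.sub_apply, Matrix.smul_apply, Matrix.mul_apply,
      Matrix.of_apply, Matrix.trace, Matrix.diag, Fin.sum_univ_three, smul_eq_mul,
      Fin.isValue, Fin.zero_eta, Fin.mk_one, Fin.reduceFinMk, Fin.reduceEq, reduceIte] at hN
    beta_reduce
    simp only [div_mul_eq_mul_div, ← add_div]
    rw [eq_div_iff h4]
    simp only [hqdef, htrAdef, Fin.sum_univ_three, Fin.isValue, Fin.zero_eta, Fin.mk_one,
      Fin.reduceFinMk, Fin.reduceEq, reduceIte]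
    try simp only [hs 0 1, hs 0 2, hs 1 2] at hN
    try simp only [hs 0 1, hs 0 2, hs 1 2]
    rw [hnrel] at hN
    rw [hnrel]
    linear_combination 2 * hN
  · have hN := hN0 2 2
    simp only [hNdef, hMdef, htdef, hPdef, Matrix.sub_apply, Matrix.smul_apply, Matrix.mul_apply,
      Matrix.of_apply, Matrix.trace, Matrix.diag, Fin.sum_univ_three, smul_eq_mul,
      Fin.isValue, Fin.zero_eta, Fin.mk_one, Fin.reduceFinMk, Fin.reduceEq, reduceIte] at hN
    beta_reduce
    simp only [div_mul_eq_mul_div, ← add_div]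
    rw [eq_div_iff h4]
    simp only [hqdef, htrAdef, Fin.sum_univ_three, Fin.isValue, Fin.zero_eta, Fin.mk_one,
      Fin.reduceFinMk, Fin.reduceEq, reduceIte]
    try simp only [hs 0 1, hs 0 2, hs 1 2] at hN
    try simp only [hs 0 1, hs 0 2, hs 1 2]
    rw [hnrel] at hN
    rw [hnrel]
    linear_combination 2 * hN
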